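/- For a normalized stratified grammar Γ and any nonterminal X and multiset m of Y-nonterminals, X can derive the multiset m (using only rules of forms X → X ∥ Y^q and X → Y_1^{q_1} ∥ ... ∥ Y_k^{q_k}) if and only if X can derive the reduced multiset ⌊m⌋_Γ. -/

import Mathlib

/-- `Matches ruleA ruleB X m`: the nonterminal `X` can produce the multiset `m`
of `Y`-nonterminals using one rule `X → Y₁^{q₁} ∥ … ∥ Y_k^{q_k}` (from `ruleB`)
followed by arbitrarily many applications of rules `X → X ∥ Y^q` (from the
normalized rule map `ruleA`). -/
inductive Matches {NX NY : Type} [DecidableEq NY]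
    (ruleA : NX → NY → Option ℕ) (ruleB : Finset (NX × Multiset NY)) :
    NX → Multiset NY → Prop
  | base (X : NX) (m : Multiset NY) : (X, m) ∈ ruleB → Matches ruleA ruleB X m
  | step (X : NX) (Y : NY) (q : ℕ) (m : Multiset NY) :
      ruleA X Y = some q → Matches ruleA ruleB X m →
      Matches ruleA ruleB X (m + q • ({Y} : Multiset NY))

/-- The period `p(Y)`: the lcm of the exponents of the rules `X → X ∥ Y^q`. -/
def pFun {NX NY : Type} [Fintype NX] (ruleA : NX → NY → Option ℕ) (Y : NY) : ℕ :=
  Finset.univ.lcm (fun X : NX => (ruleA X Y).getD 1)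

/-- The base bound `b(Y)`: the maximal exponent of `Y` in the rules of the form
`X → Y₁^{q₁} ∥ … ∥ Y_k^{q_k}`. -/
def bFun {NX NY : Type} [DecidableEq NY] (ruleB : Finset (NX × Multiset NY))
    (Y : NY) : ℕ :=
  ruleB.sup (fun r => r.2.count Y)

/-- The threshold `q(Y) = b(Y) + p(Y)`. -/
def qFun {NX NY : Type} [Fintype NX] [DecidableEq NY]
    (ruleA : NX → NY → Option ℕ) (ruleB : Finset (NX × Multiset NY)) (Y : NY) : ℕ :=
  bFun ruleB Y + pFun ruleA Y

/-- The truncated count of `Y` in `m`. -/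
def truncC {NX NY : Type} [Fintype NX] [DecidableEq NY]
    (ruleA : NX → NY → Option ℕ) (ruleB : Finset (NX × Multiset NY))
    (m : Multiset NY) (Y : NY) : ℕ :=
  if m.count Y < qFun ruleA ruleB Y then m.count Y
  else qFun ruleA ruleB Y + (m.count Y - qFun ruleA ruleB Y) % pFun ruleA Y

/-- The reduced (truncated) multiset `⌊m⌋_Γ`. -/
def truncM {NX NY : Type} [Fintype NX] [Fintype NY] [DecidableEq NY]
    (ruleA : NX → NY → Option ℕ) (ruleB : Finset (NX × Multiset NY))
    (m : Multiset NY) : Multiset NY :=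
  ∑ Y : NY, truncC ruleA ruleB m Y • ({Y} : Multiset NY)

section Aux

variable {NX NY : Type} [DecidableEq NY]

/-- Per-coordinate characterization of reachable multisets from a base `m₀`. -/
def Cond (ruleA : NX → NY → Option ℕ) (X : NX) (m₀ m : Multiset NY) : Prop :=
  ∀ Y : NY, (ruleA X Y = none → m.count Y = m₀.count Y) ∧
    (∀ q, ruleA X Y = some q → m₀.count Y ≤ m.count Y ∧ q ∣ m.count Y - m₀.count Y)

lemma count_sum_nsmul [Fintype NY] (f : NY → ℕ) (Z : NY) :
    (∑ Y : NY, f Y • ({Y} : Multiset NY)).count Z = f Z := by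
  classical
  rw [Multiset.count_sum']
  simp [Multiset.count_nsmul, Multiset.count_singleton]

lemma matches_iff_cond (ruleA : NX → NY → Option ℕ)
    (ruleB : Finset (NX × Multiset NY)) [Fintype NY]
    (X : NX) (m : Multiset NY) :
    Matches ruleA ruleB X m ↔
      ∃ m₀, (X, m₀) ∈ ruleB ∧ Cond ruleA X m₀ m := by
  classical
  constructor
  · intro h
    induction h with
    | base m₁ hm =>
        exact ⟨m₁, hm, fun Y => ⟨fun _ => rfl, fun q _ => ⟨le_refl _, by simp⟩⟩⟩
    | step Y q m' hXY hm ih =>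
        obtain ⟨m₀, hm₀, hc⟩ := ih
        refine ⟨m₀, hm₀, fun Z => ?_⟩
        have hcount : (m' + q • ({Y} : Multiset NY)).count Z
            = m'.count Z + if Z = Y then q else 0 := by
          simp [Multiset.count_nsmul, Multiset.count_singleton]
        by_cases hZ : Z = Y
        · subst hZ
          obtain ⟨h1, h2⟩ := (hc Z).2 q hXY
          constructor
          · intro hnone; rw [hnone] at hXY; exact absurd hXY (by simp)
          · intro q' hq'
            rw [hXY] at hq'
            injection hq' with hq'
            subst hq'
            rw [hcount, if_pos rfl]
            refine ⟨by omega, ?_⟩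
            rw [Nat.sub_add_comm h1]
            exact Dvd.dvd.add h2 (dvd_refl q)
        · have h := hc Z
          rw [hcount] at *
          rw [if_neg hZ, Nat.add_zero] at *
          exact h
  · rintro ⟨m₀, hm₀, hc⟩
    have key : ∀ (t : Multiset NY) (Y : NY) (k : ℕ),
        Matches ruleA ruleB X t →
        (ruleA X Y = none → k = 0) →
        (∀ q, ruleA X Y = some q → q ∣ k) →
        Matches ruleA ruleB X (t + k • ({Y} : Multiset NY)) := by
      intro t Y k ht h0 hd
      cases hXY : ruleA X Y with
      | none => rw [h0 hXY]; simpa using ht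
      | some q =>
          obtain ⟨c, rfl⟩ := hd q hXY
          clear h0 hd
          induction c with
          | zero => simpa using ht
          | succ n ih =>
              have he : t + (q * (n + 1)) • ({Y} : Multiset NY)
                  = (t + (q * n) • ({Y} : Multiset NY)) + q • ({Y} : Multiset NY) := by
                rw [add_assoc, ← add_nsmul, Nat.mul_succ]
              rw [he]
              exact Matches.step X Y q _ hXY ih
    have hle : ∀ Y, m₀.count Y ≤ m.count Y := by
      intro Y
      cases hXY : ruleA X Y with
      | none => rw [(hc Y).1 hXY]
      | some q => exact ((hc Y).2 q hXY).1
    have hdecomp : m = m₀ + ∑ Y : NY, (m.count Y - m₀.count Y) • ({Y} : Multiset NY) := by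
      ext Z
      rw [Multiset.count_add, count_sum_nsmul]
      have := hle Z
      omega
    rw [hdecomp]
    have main : ∀ s : Finset NY,
        Matches ruleA ruleB X
          (m₀ + ∑ Y ∈ s, (m.count Y - m₀.count Y) • ({Y} : Multiset NY)) := by
      intro s
      induction s using Finset.induction_on with
      | empty => simpa using Matches.base X m₀ hm₀
      | insert a s' hx ih =>
          rw [Finset.sum_insert hx, add_comm ((m.count a - m₀.count a) • _) _, ← add_assoc]
          refine key _ a _ ih ?_ ?_
          · intro hXY
            rw [(hc a).1 hXY]; omega
          · intro q hXY
            exact ((hc a).2 q hXY).2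
    exact main Finset.univ

end Aux

/-- for a normalized stratified grammar, a nonterminal `X` can
derive a multiset `m` of `Y`-nonterminals iff it can derive the reduced
multiset `⌊m⌋_Γ`. -/
theorem matches_iff_matches_trunc {NX NY : Type} [Fintype NX] [Fintype NY]
    [DecidableEq NY]
    (ruleA : NX → NY → Option ℕ) (ruleB : Finset (NX × Multiset NY))
    (hA : ∀ X Y q, ruleA X Y = some q → 1 ≤ q)
    (X : NX) (m : Multiset NY) :
    Matches ruleA ruleB X m ↔ Matches ruleA ruleB X (truncM ruleA ruleB m) := by
  classical
  have hp : ∀ Y : NY, 1 ≤ pFun ruleA Y := by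
    intro Y
    rcases Nat.eq_zero_or_pos (pFun ruleA Y) with h | h
    · exfalso
      rw [pFun, Finset.lcm_eq_zero_iff] at h
      obtain ⟨X', -, hX'⟩ := h
      cases hXY : ruleA X' Y with
      | none => simp [hXY] at hX'
      | some q =>
          have := hA X' Y q hXY
          simp [hXY] at hX'; omega
    · exact h
  have hdvd : ∀ (X' : NX) (Y : NY) (q : ℕ), ruleA X' Y = some q → q ∣ pFun ruleA Y := by
    intro X' Y q hXY
    have := Finset.dvd_lcm (f := fun X : NX => (ruleA X Y).getD 1)
      (Finset.mem_univ X')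
    simpa [hXY, pFun] using this
  have hcount : ∀ Y, (truncM ruleA ruleB m).count Y = truncC ruleA ruleB m Y := by
    intro Y
    rw [truncM, count_sum_nsmul]
  rw [matches_iff_cond, matches_iff_cond]
  apply exists_congr
  intro m₀
  apply and_congr_right
  intro hm₀
  have hb : ∀ Y, m₀.count Y ≤ bFun ruleB Y := fun Y =>
    Finset.le_sup (f := fun r : NX × Multiset NY => r.2.count Y) hm₀
  unfold Cond
  apply forall_congr'
  intro Y
  rw [hcount Y]
  have hbY := hb Y
  set p := pFun ruleA Y with hpdef
  set t := qFun ruleA ruleB Y with htdef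
  have hpt : t = bFun ruleB Y + p := rfl
  have hp1 : 1 ≤ p := hp Y
  set n := m.count Y with hn
  by_cases hlt : n < t
  · rw [truncC, ← hn, ← htdef, if_pos hlt]
  · rw [truncC, ← hn, ← htdef, ← hpdef, if_neg hlt]
    set n' := t + (n - t) % p with hn'
    have hmod : (n - t) % p ≤ n - t := Nat.mod_le _ _
    have hmodlt : (n - t) % p < p := Nat.mod_lt _ (by omega)
    have hpn : p ∣ n - n' := by
      have h1 : p ∣ (n - t) - (n - t) % p := Nat.dvd_sub_mod _
      have h2 : n - n' = (n - t) - (n - t) % p := by omega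
      rw [h2]; exact h1
    have hn'le : n' ≤ n := by omega
    have hn'ge : t ≤ n' := by omega
    apply and_congr
    · constructor <;> intro h hnone <;> have := h hnone <;> omega
    · apply forall_congr'
      intro q
      constructor <;> intro h hsome <;> obtain ⟨h1, h2⟩ := h hsome <;>
        have hqp : q ∣ p := hdvd X Y q hsome
      · refine ⟨by omega, ?_⟩
        have he : n' - m₀.count Y = (n - m₀.count Y) - (n - n') := by omega
        rw [he]
        exact Nat.dvd_sub h2 (hqp.trans hpn)
      · refine ⟨by omega, ?_⟩
        have he : n - m₀.count Y = (n' - m₀.count Y) + (n - n') := by omega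
        rw [he]
        exact Dvd.dvd.add h2 (hqp.trans hpn)
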